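/- Let λ > 0, P = (a,b) ∈ Ω_λ, and r ≥ 1. A point X = (x₁,x₂) ∈ Ω_λ satisfies d_F(X,P) = (ln r)/λ if and only if (x₁ - ra)² + (x₂ - rb)² = ((r-1)/λ)²; i.e., the type 2 λ-Funk circle of center P lies on the Euclidean circle of center rP and radius (r-1)/λ. -/

import Mathlib

open RealInnerProductSpace Classical

noncomputable def pt (a b : ℝ) : EuclideanSpace ℝ (Fin 2) :=
  (WithLp.equiv 2 (Fin 2 → ℝ)).symm ![a, b]

/-- The λ-Funk metric. -/
noncomputable def Funk (lam : ℝ) (x y : EuclideanSpace ℝ (Fin 2)) : ℝ :=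
  (Real.sqrt (lam ^ 2 * ⟪x, y⟫ ^ 2 + ‖y‖ ^ 2 * (1 - lam ^ 2 * ‖x‖ ^ 2)) + lam * ⟪x, y⟫) /
    (1 - lam ^ 2 * ‖x‖ ^ 2)

/-- The λ-Funk distance. -/
noncomputable def dF (lam : ℝ) (P Q : EuclideanSpace ℝ (Fin 2)) : ℝ :=
  if P = Q then 0
  else (1 / lam) * Real.log
    ((Real.sqrt (lam ^ 2 * ⟪P, Q - P⟫ ^ 2 + (1 - lam ^ 2 * ‖P‖ ^ 2) * ‖Q - P‖ ^ 2)
        - lam * ⟪P, Q - P⟫) /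
     (Real.sqrt (lam ^ 2 * ⟪P, Q - P⟫ ^ 2 + (1 - lam ^ 2 * ‖P‖ ^ 2) * ‖Q - P‖ ^ 2)
        - lam * ⟪Q, Q - P⟫))

lemma inner_pt (c d e f : ℝ) : ⟪pt c d, pt e f⟫ = c*e + d*f := by
  simp [pt, PiLp.inner_apply, Fin.sum_univ_two]
  ring

lemma sub_pt (c d e f : ℝ) : pt c d - pt e f = pt (c-e) (d-f) := by
  ext i; fin_cases i <;> simp [pt]

lemma normsq_pt (c d : ℝ) : ‖pt c d‖^2 = c^2 + d^2 := by
  rw [← real_inner_self_eq_norm_sq, inner_pt]; ring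

lemma bounds (lam u v w : ℝ) (hw : lam^2*w < 1)
    (hp : lam^2*(w + 2*u + v) < 1) (hv : 0 < v) :
    lam*(u+v) < Real.sqrt (lam^2*u^2 + (1 - lam^2*w)*v) ∧
    lam*u < Real.sqrt (lam^2*u^2 + (1 - lam^2*w)*v) := by
  set E := lam^2*u^2 + (1 - lam^2*w)*v with hE
  have h1 : |lam*(u+v)| < Real.sqrt E := by
    rw [← Real.sqrt_sq_eq_abs]
    apply Real.sqrt_lt_sqrt (sq_nonneg _)
    nlinarith
  have h2 : |lam*u| < Real.sqrt E := by
    rw [← Real.sqrt_sq_eq_abs]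
    apply Real.sqrt_lt_sqrt (sq_nonneg _)
    nlinarith
  exact ⟨lt_of_le_of_lt (le_abs_self _) h1, lt_of_le_of_lt (le_abs_self _) h2⟩

lemma key (lam u v w r : ℝ) (hlam : 0 < lam) (hw : lam^2*w < 1)
    (hp : lam^2*(w + 2*u + v) < 1) (hv : 0 < v) (hr : 1 < r) :
    (Real.sqrt (lam^2*u^2 + (1 - lam^2*w)*v) - lam*u) /
      (Real.sqrt (lam^2*u^2 + (1 - lam^2*w)*v) - lam*(u+v)) = r ↔
    (r-1)^2*w + 2*r*(r-1)*u + r^2*v = (r-1)^2/lam^2 := by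
  obtain ⟨hden, hnum⟩ := bounds lam u v w hw hp hv
  set s := Real.sqrt (lam^2*u^2 + (1 - lam^2*w)*v) with hsdef
  have hs0 : 0 ≤ s := Real.sqrt_nonneg _
  have hs2 : s ^ 2 = lam^2*u^2 + (1 - lam^2*w)*v := Real.sq_sqrt (by nlinarith [sq_nonneg (lam*u)])
  have hlam2 : (lam^2:ℝ) ≠ 0 := pow_ne_zero 2 hlam.ne'
  rw [div_eq_iff (by linarith : s - lam*(u+v) ≠ 0), eq_div_iff hlam2]
  constructor
  · intro h
    have heq : (r-1)*s = lam*((r-1)*u + r*v) := by linear_combination (-1 : ℝ)*h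
    have hsq : ((r-1)*s)^2 = (lam*((r-1)*u + r*v))^2 := by rw [heq]
    have h2 : v * ((r-1)^2 - lam^2*((r-1)^2*w + 2*r*(r-1)*u + r^2*v)) = 0 := by
      linear_combination hsq - (r-1)^2*hs2
    have h3 : (r-1)^2 - lam^2*((r-1)^2*w + 2*r*(r-1)*u + r^2*v) = 0 := by
      rcases mul_eq_zero.mp h2 with h' | h'
      · exact absurd h' hv.ne'
      · exact h'
    linear_combination (-1:ℝ)*h3
  · intro h
    have hC : ((r-1)^2*w + 2*r*(r-1)*u + r^2*v) * lam^2 = (r-1)^2 := h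
    have hsq : ((r-1)*s)^2 = (lam*((r-1)*u + r*v))^2 := by
      rw [mul_pow, mul_pow, hs2]; linear_combination (-v) * hC
    have hT2 : 2*r*lam*(lam*((r-1)*u + r*v)) = (r-1)^2*(1-lam^2*w) + lam^2*r^2*v := by
      linear_combination hC
    have hpos : 0 < (r-1)^2*(1-lam^2*w) + lam^2*r^2*v := by
      have hw' : 0 < 1 - lam^2*w := by linarith
      have h4 : 0 < (r-1)^2*(1-lam^2*w) := mul_pos (pow_pos (by linarith) 2) hw'
      have h5 : 0 < lam^2*r^2*v :=
        mul_pos (mul_pos (pow_pos hlam 2) (pow_pos (by linarith) 2)) hv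
      linarith
    have h6 : 0 < 2*r*lam := mul_pos (by linarith) hlam
    have hT : 0 ≤ lam*((r-1)*u + r*v) := by
      by_contra hT'
      push_neg at hT'
      have := mul_neg_of_pos_of_neg h6 hT'
      linarith
    have heq : (r-1)*s = lam*((r-1)*u + r*v) := by
      rw [← Real.sqrt_sq (mul_nonneg (by linarith) hs0), hsq, Real.sqrt_sq hT]
    linear_combination (-1:ℝ)*heq

theorem funk_circle_type2 (lam a b x₁ x₂ r : ℝ) (hlam : 0 < lam)
    (hP : ‖pt a b‖ < 1 / lam) (hX : ‖pt x₁ x₂‖ < 1 / lam) (hr : 1 ≤ r) :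
    dF lam (pt x₁ x₂) (pt a b) = Real.log r / lam ↔
      (x₁ - r * a) ^ 2 + (x₂ - r * b) ^ 2 = ((r - 1) / lam) ^ 2 := by
  have hlam2 : (lam^2:ℝ) ≠ 0 := pow_ne_zero 2 hlam.ne'
  have hP2 : a^2 + b^2 < 1/lam^2 := by
    have h := pow_lt_pow_left₀ hP (norm_nonneg _) (n := 2) (by norm_num)
    rwa [normsq_pt, div_pow, one_pow] at h
  have hX2 : x₁^2 + x₂^2 < 1/lam^2 := by
    have h := pow_lt_pow_left₀ hX (norm_nonneg _) (n := 2) (by norm_num)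
    rwa [normsq_pt, div_pow, one_pow] at h
  have hw : lam^2*(x₁^2+x₂^2) < 1 := by
    have h := mul_lt_mul_of_pos_left hX2 (pow_pos hlam 2)
    rwa [mul_one_div, div_self hlam2] at h
  have hpa : lam^2*(a^2+b^2) < 1 := by
    have h := mul_lt_mul_of_pos_left hP2 (pow_pos hlam 2)
    rwa [mul_one_div, div_self hlam2] at h
  by_cases hXP : pt x₁ x₂ = pt a b
  · simp only [pt] at hXP
    have h1 : (![x₁,x₂] : Fin 2 → ℝ) = ![a,b] := (WithLp.equiv 2 (Fin 2 → ℝ)).symm.injective hXP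
    have hx1 : x₁ = a := congrFun h1 0
    have hx2 : x₂ = b := congrFun h1 1
    subst hx1; subst hx2
    rw [dF, if_pos rfl]
    constructor
    · intro h
      have hlog : Real.log r = 0 := by
        rcases div_eq_zero_iff.mp h.symm with h' | h'
        · exact h'
        · exact absurd h' hlam.ne'
      have hr1 : r = 1 := by
        rcases Real.log_eq_zero.mp hlog with h' | h' | h' <;> linarith
      subst hr1; norm_num
    · intro h
      have h2 : (r-1)^2 * (x₁^2 + x₂^2 - 1/lam^2) = 0 := by linear_combination h
      have hr1 : r = 1 := by
        rcases mul_eq_zero.mp h2 with h' | h'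
        · have := pow_eq_zero_iff (n := 2) (by norm_num) |>.mp h'
          linarith
        · linarith
      subst hr1; simp
  · rw [dF, if_neg hXP, sub_pt]
    simp only [inner_pt, normsq_pt]
    rw [show a*(a-x₁)+b*(b-x₂) = (x₁*(a-x₁)+x₂*(b-x₂)) + ((a-x₁)^2+(b-x₂)^2) from by ring]
    have hvne : (a-x₁)^2+(b-x₂)^2 ≠ 0 := by
      intro h0
      apply hXP
      have h1 : (a-x₁)^2 = 0 := le_antisymm (by nlinarith [sq_nonneg (b-x₂)]) (sq_nonneg _)
      have h2 : (b-x₂)^2 = 0 := le_antisymm (by nlinarith [sq_nonneg (a-x₁)]) (sq_nonneg _)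
      have e1 : x₁ = a := by nlinarith [pow_eq_zero_iff (n := 2) (two_ne_zero) |>.mp h1]
      have e2 : x₂ = b := by nlinarith [pow_eq_zero_iff (n := 2) (two_ne_zero) |>.mp h2]
      rw [e1, e2]
    have hv : 0 < (a-x₁)^2+(b-x₂)^2 := lt_of_le_of_ne (by positivity) (Ne.symm hvne)
    have hp' : lam^2*((x₁^2+x₂^2) + 2*(x₁*(a-x₁)+x₂*(b-x₂)) + ((a-x₁)^2+(b-x₂)^2)) < 1 := by
      have he : (x₁^2+x₂^2) + 2*(x₁*(a-x₁)+x₂*(b-x₂)) + ((a-x₁)^2+(b-x₂)^2) = a^2+b^2 := by ring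
      rw [he]; exact hpa
    obtain ⟨hden, hnum⟩ :=
      bounds lam (x₁*(a-x₁)+x₂*(b-x₂)) ((a-x₁)^2+(b-x₂)^2) (x₁^2+x₂^2) hw hp' hv
    set u := x₁*(a-x₁)+x₂*(b-x₂) with hu
    set v := (a-x₁)^2+(b-x₂)^2 with hvdef
    set w := x₁^2+x₂^2 with hwdef
    set s := Real.sqrt (lam^2*u^2 + (1 - lam^2*w)*v) with hsdef
    rcases eq_or_lt_of_le hr with hr1 | hr1
    · subst hr1
      rw [Real.log_one, zero_div]
      constructor
      · intro hL
        exfalso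
        have hQ : 1 < (s - lam*u)/(s - lam*(u+v)) := by
          rw [lt_div_iff₀ (by linarith)]
          have : 0 < lam * v := mul_pos hlam hv
          linarith
        have hpos := Real.log_pos hQ
        rcases mul_eq_zero.mp hL with h' | h'
        · rw [one_div] at h'; exact absurd (inv_eq_zero.mp h') hlam.ne'
        · linarith
      · intro hR
        exfalso
        apply hvne
        linear_combination hR
    · have hQpos : 0 < (s - lam*u)/(s - lam*(u+v)) :=
        div_pos (by linarith) (by linarith)
      have hiff1 : (1/lam) * Real.log ((s - lam*u)/(s - lam*(u+v))) = Real.log r / lam ↔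
          Real.log ((s - lam*u)/(s - lam*(u+v))) = Real.log r := by
        rw [one_div, inv_mul_eq_div, div_eq_div_iff hlam.ne' hlam.ne']
        exact mul_left_inj' hlam.ne'
      have hiff2 : Real.log ((s - lam*u)/(s - lam*(u+v))) = Real.log r ↔
          (s - lam*u)/(s - lam*(u+v)) = r := by
        constructor
        · intro h
          rw [← Real.exp_log hQpos, h, Real.exp_log (by linarith : (0:ℝ) < r)]
        · intro h; rw [h]
      rw [hiff1, hiff2, key lam u v w r hlam hw hp' hv hr1]
      rw [hu, hvdef, hwdef]
      constructor <;> intro h <;> linear_combination h
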